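/- Let n ∈ ℕ and consider the action of C_n × C_n on M_n(ℂ) by (ζ^k, ζ^l)·A = R^l S^k A S^{-k} R^{-l}. Then the group of algebra automorphisms of M_n(ℂ) commuting with this action is isomorphic to C_n × C_n: every such equivariant automorphism φ satisfies φ(R) = λ_R · R and φ(S) = λ_S · S for some λ_R, λ_S ∈ C_n, and this correspondence is a group isomorphism. -/

import Mathlib

open Complex Matrix

namespace Stmt14Aux
set_option linter.unusedSectionVars false
open Fin.NatCast

variable {n : ℕ} [NeZero n] {ζ : ℂ} {R S : Matrix (Fin n) (Fin n) ℂ}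

lemma zpowmod (h1 : ζ ^ n = 1) (p : ℕ) : ζ ^ (p % n) = ζ ^ p := by
  conv_rhs => rw [← Nat.mod_add_div p n]
  rw [pow_add, pow_mul, h1, one_pow, mul_one]

lemma S_entry (hS : ∀ i j : Fin n, S i j = if (i : ℕ) = ((j : ℕ) + 1) % n then (1 : ℂ) else 0)
    (i j : Fin n) : S i j = if i = j + 1 then (1 : ℂ) else 0 := by
  rw [hS]
  have hv : ((j + 1 : Fin n) : ℕ) = ((j : ℕ) + 1) % n := by
    simp only [Fin.add_def, Fin.val_one']
    conv_rhs => rw [Nat.add_mod]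
    rw [Nat.mod_eq_of_lt j.isLt]
  refine if_congr ?_ rfl rfl
  rw [Fin.ext_iff, hv]

lemma S_mul (hS' : ∀ i j : Fin n, S i j = if i = j + 1 then (1 : ℂ) else 0)
    (A : Matrix (Fin n) (Fin n) ℂ) (i j : Fin n) : (S * A) i j = A (i - 1) j := by
  rw [Matrix.mul_apply, Finset.sum_eq_single (i - 1)]
  · rw [hS', if_pos (by rw [sub_add_cancel]), one_mul]
  · intro b _ hb
    rw [hS', if_neg, zero_mul]
    intro h
    exact hb (eq_sub_iff_add_eq.mpr h.symm)
  · intro h; exact absurd (Finset.mem_univ _) h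

lemma mul_S (hS' : ∀ i j : Fin n, S i j = if i = j + 1 then (1 : ℂ) else 0)
    (A : Matrix (Fin n) (Fin n) ℂ) (i j : Fin n) : (A * S) i j = A i (j + 1) := by
  rw [Matrix.mul_apply, Finset.sum_eq_single (j + 1)]
  · rw [hS', if_pos rfl, mul_one]
  · intro b _ hb
    rw [hS', if_neg (fun h => hb h), mul_zero]
  · intro h; exact absurd (Finset.mem_univ _) h

lemma S_pow (hS' : ∀ i j : Fin n, S i j = if i = j + 1 then (1 : ℂ) else 0)
    (m : ℕ) (i j : Fin n) : (S ^ m) i j = if i = j + (m : Fin n) then (1 : ℂ) else 0 := by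
  induction m generalizing i j with
  | zero => simp [Matrix.one_apply]
  | succ m ih =>
      rw [pow_succ, mul_S hS', ih]
      have : j + 1 + (m : Fin n) = j + ((m + 1 : ℕ) : Fin n) := by push_cast; abel
      rw [this]

lemma S_npow (hS' : ∀ i j : Fin n, S i j = if i = j + 1 then (1 : ℂ) else 0) :
    S ^ n = 1 := by
  ext i j
  rw [S_pow hS', Matrix.one_apply]
  simp


lemma R_pow (hR : R = Matrix.diagonal fun i : Fin n => ζ ^ (i : ℕ)) (b : ℕ) :
    R ^ b = Matrix.diagonal fun i : Fin n => ζ ^ ((i : ℕ) * b) := by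
  have : ((fun i : Fin n => ζ ^ (i : ℕ)) ^ b) = fun i : Fin n => ζ ^ ((i : ℕ) * b) := by
    funext i
    rw [Pi.pow_apply, ← pow_mul]
  rw [hR, Matrix.diagonal_pow, this]

lemma R_npow (hR : R = Matrix.diagonal fun i : Fin n => ζ ^ (i : ℕ)) (h1 : ζ ^ n = 1) :
    R ^ n = 1 := by
  rw [R_pow hR]
  have : (fun i : Fin n => ζ ^ ((i : ℕ) * n)) = fun _ => (1 : ℂ) := by
    funext i; rw [mul_comm, pow_mul, h1, one_pow]
  rw [this, Matrix.diagonal_one]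

lemma RS_comm (hR : R = Matrix.diagonal fun i : Fin n => ζ ^ (i : ℕ))
    (hS' : ∀ i j : Fin n, S i j = if i = j + 1 then (1 : ℂ) else 0)
    (h1 : ζ ^ n = 1) : R * S = ζ • (S * R) := by
  ext i j
  rw [hR, Matrix.smul_apply, Matrix.diagonal_mul, Matrix.mul_diagonal, hS']
  by_cases h : i = j + 1
  · rw [if_pos h, mul_one, one_mul, h]
    have hv : ((j + 1 : Fin n) : ℕ) = ((j : ℕ) + 1) % n := by
      simp only [Fin.add_def, Fin.val_one']
      conv_rhs => rw [Nat.add_mod]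
      rw [Nat.mod_eq_of_lt j.isLt]
    rw [hv, zpowmod h1, pow_succ, mul_comm (ζ ^ (j : ℕ)) ζ, smul_eq_mul]
  · rw [if_neg h]; simp

lemma R_pow_S (hR : R = Matrix.diagonal fun i : Fin n => ζ ^ (i : ℕ))
    (hS' : ∀ i j : Fin n, S i j = if i = j + 1 then (1 : ℂ) else 0)
    (h1 : ζ ^ n = 1) : ∀ a b : ℕ, R ^ a * S ^ b = ζ ^ (a * b) • (S ^ b * R ^ a) := by
  have hRSb : ∀ b : ℕ, R * S ^ b = ζ ^ b • (S ^ b * R) := by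
    intro b
    induction b with
    | zero => simp
    | succ b ih =>
        rw [pow_succ, ← mul_assoc, ih, smul_mul_assoc, mul_assoc, RS_comm hR hS' h1,
          mul_smul_comm, smul_smul, ← mul_assoc, ← pow_succ]
  intro a b
  induction a with
  | zero => simp
  | succ a ih =>
      rw [pow_succ, mul_assoc, hRSb, mul_smul_comm, ← mul_assoc, ih, smul_mul_assoc,
        smul_smul, mul_assoc, ← pow_succ, ← pow_add]
      congr 2
      ring

lemma S_powmul_n (hS' : ∀ i j : Fin n, S i j = if i = j + 1 then (1 : ℂ) else 0)
    (a : ℕ) : S ^ (a * n) = 1 := by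
  rw [mul_comm, pow_mul, S_npow hS', one_pow]

lemma R_powmul_n (hR : R = Matrix.diagonal fun i : Fin n => ζ ^ (i : ℕ)) (h1 : ζ ^ n = 1)
    (a : ℕ) : R ^ (a * n) = 1 := by
  rw [mul_comm, pow_mul, R_npow hR h1, one_pow]

lemma pow_cancel_arith (k : ℕ) (hn : 0 < n) : k + k * (n - 1) = k * n := by
  calc k + k * (n - 1) = k * (1 + (n - 1)) := by rw [Nat.mul_add, Nat.mul_one]
  _ = k * n := by congr 1; omega

lemma S_pow_cancel (hS' : ∀ i j : Fin n, S i j = if i = j + 1 then (1 : ℂ) else 0)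
    (k : ℕ) : S ^ k * S ^ (k * (n - 1)) = 1 := by
  rw [← pow_add, pow_cancel_arith k (NeZero.pos n), S_powmul_n hS']

lemma S_pow_cancel' (hS' : ∀ i j : Fin n, S i j = if i = j + 1 then (1 : ℂ) else 0)
    (k : ℕ) : S ^ (k * (n - 1)) * S ^ k = 1 := by
  rw [← pow_add, Nat.add_comm, pow_cancel_arith k (NeZero.pos n), S_powmul_n hS']

lemma R_pow_cancel (hR : R = Matrix.diagonal fun i : Fin n => ζ ^ (i : ℕ)) (h1 : ζ ^ n = 1)
    (k : ℕ) : R ^ k * R ^ (k * (n - 1)) = 1 := by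
  rw [← pow_add, pow_cancel_arith k (NeZero.pos n), R_powmul_n hR h1]

lemma R_pow_cancel' (hR : R = Matrix.diagonal fun i : Fin n => ζ ^ (i : ℕ)) (h1 : ζ ^ n = 1)
    (k : ℕ) : R ^ (k * (n - 1)) * R ^ k = 1 := by
  rw [← pow_add, Nat.add_comm, pow_cancel_arith k (NeZero.pos n), R_powmul_n hR h1]

lemma S_pow_inv (hS' : ∀ i j : Fin n, S i j = if i = j + 1 then (1 : ℂ) else 0)
    (k : ℕ) : (S ^ k)⁻¹ = S ^ (k * (n - 1)) :=
  Matrix.inv_eq_right_inv (S_pow_cancel hS' k)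

lemma R_pow_inv (hR : R = Matrix.diagonal fun i : Fin n => ζ ^ (i : ℕ)) (h1 : ζ ^ n = 1)
    (k : ℕ) : (R ^ k)⁻¹ = R ^ (k * (n - 1)) :=
  Matrix.inv_eq_right_inv (R_pow_cancel hR h1 k)


/-- Conjugation by an invertible matrix as an algebra automorphism. -/
noncomputable def conjAE (U Ui : Matrix (Fin n) (Fin n) ℂ)
    (h1 : U * Ui = 1) (h2 : Ui * U = 1) :
    Matrix (Fin n) (Fin n) ℂ ≃ₐ[ℂ] Matrix (Fin n) (Fin n) ℂ where
  toFun A := U * A * Ui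
  invFun A := Ui * A * U
  left_inv A := by
    show Ui * (U * A * Ui) * U = A
    rw [← mul_assoc, ← mul_assoc, h2, one_mul, mul_assoc, h2, mul_one]
  right_inv A := by
    show U * (Ui * A * U) * Ui = A
    rw [← mul_assoc, ← mul_assoc, h1, one_mul, mul_assoc, h1, mul_one]
  map_mul' A B := by
    show U * (A * B) * Ui = (U * A * Ui) * (U * B * Ui)
    rw [show U * A * Ui * (U * B * Ui) = U * A * ((Ui * U) * (B * Ui)) by
      simp only [mul_assoc], h2, one_mul]
    simp only [mul_assoc]
  map_add' A B := by
    show U * (A + B) * Ui = U * A * Ui + U * B * Ui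
    rw [Matrix.mul_add, Matrix.add_mul]
  commutes' c := by
    show U * algebraMap ℂ _ c * Ui = algebraMap ℂ _ c
    simp only [Algebra.algebraMap_eq_smul_one]
    rw [mul_smul_comm, mul_one, smul_mul_assoc, h1]

@[simp] lemma conjAE_apply (U Ui : Matrix (Fin n) (Fin n) ℂ)
    (h1 : U * Ui = 1) (h2 : Ui * U = 1) (A : Matrix (Fin n) (Fin n) ℂ) :
    conjAE U Ui h1 h2 A = U * A * Ui := rfl

lemma conj_comm {U Ui P Pi : Matrix (Fin n) (Fin n) ℂ}
    (hU : U * Ui = 1) (hUi : Ui * U = 1) (hP : P * Pi = 1) (hPi : Pi * P = 1)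
    {μ : ℂ} (hUP : U * P = μ • (P * U)) (A : Matrix (Fin n) (Fin n) ℂ) :
    U * (P * A * Pi) * Ui = P * (U * A * Ui) * Pi := by
  have hPiU : Pi * U = μ • (U * Pi) := by
    have e : Pi * (U * P) * Pi = Pi * U := by
      rw [mul_assoc Pi (U * P) Pi, mul_assoc U P Pi, hP, mul_one]
    rw [← e, hUP, mul_smul_comm, smul_mul_assoc]
    rw [show Pi * (P * U) * Pi = Pi * P * (U * Pi) by simp only [mul_assoc], hPi, one_mul]
  have hUiPi : Ui * Pi = μ • (Pi * Ui) := by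
    have e : Ui * (Pi * U) * Ui = Ui * Pi := by
      rw [mul_assoc Ui (Pi * U) Ui, mul_assoc Pi U Ui, hU, mul_one]
    rw [← e, hPiU, mul_smul_comm, smul_mul_assoc]
    rw [show Ui * (U * Pi) * Ui = Ui * U * (Pi * Ui) by simp only [mul_assoc], hUi, one_mul]
  simp only [← mul_assoc]
  rw [hUP]
  simp only [smul_mul_assoc]
  rw [mul_assoc (P * U * A) Ui Pi, hUiPi, mul_smul_comm]
  simp only [← mul_assoc]

lemma W_mul (hR : R = Matrix.diagonal fun i : Fin n => ζ ^ (i : ℕ))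
    (hS' : ∀ i j : Fin n, S i j = if i = j + 1 then (1 : ℂ) else 0)
    (h1 : ζ ^ n = 1) (a b c d : ℕ) :
    (S ^ a * R ^ b) * (S ^ c * R ^ d) = ζ ^ (b * c) • (S ^ (a + c) * R ^ (b + d)) := by
  rw [mul_assoc, ← mul_assoc (R ^ b) (S ^ c) (R ^ d), R_pow_S hR hS' h1 b c,
    smul_mul_assoc, mul_smul_comm, mul_assoc (S ^ c) (R ^ b) (R ^ d),
    ← mul_assoc (S ^ a) (S ^ c) _, ← pow_add, ← pow_add]

lemma W_comm (hR : R = Matrix.diagonal fun i : Fin n => ζ ^ (i : ℕ))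
    (hS' : ∀ i j : Fin n, S i j = if i = j + 1 then (1 : ℂ) else 0)
    (h1 : ζ ^ n = 1) (a b c d : ℕ) :
    (S ^ a * R ^ b) * (S ^ c * R ^ d)
      = ζ ^ (b * c + (d * a) * (n - 1)) • ((S ^ c * R ^ d) * (S ^ a * R ^ b)) := by
  rw [W_mul hR hS' h1 a b c d, W_mul hR hS' h1 c d a b, smul_smul, Nat.add_comm c a,
    Nat.add_comm d b]
  congr 1
  rw [← pow_add, ← zpowmod h1 (b * c), ← zpowmod h1 (b * c + d * a * (n - 1) + d * a)]
  congr 1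
  have e : b * c + d * a * (n - 1) + d * a = b * c + (d * a) * n := by
    have : d * a * (n - 1) + d * a = d * a * n := by
      calc d * a * (n - 1) + d * a = d * a * ((n - 1) + 1) := by rw [Nat.mul_add, Nat.mul_one]
      _ = d * a * n := by congr 1; have := NeZero.pos n; omega
    omega
  rw [e, Nat.add_mul_mod_self_right]


lemma comm_R_diag (hζp : IsPrimitiveRoot ζ n)
    (hR : R = Matrix.diagonal fun i : Fin n => ζ ^ (i : ℕ))
    {X : Matrix (Fin n) (Fin n) ℂ} (h : X * R = R * X) :
    X = Matrix.diagonal fun i => X i i := by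
  ext i j
  by_cases hij : i = j
  · subst hij; rw [Matrix.diagonal_apply_eq]
  · rw [Matrix.diagonal_apply_ne _ hij]
    have h' : (X * R) i j = (R * X) i j := by rw [h]
    rw [hR, Matrix.mul_diagonal, Matrix.diagonal_mul] at h'
    by_contra hX
    apply hij
    have hz : ζ ^ (j : ℕ) = ζ ^ (i : ℕ) := by
      have h2 : ζ ^ (j : ℕ) * X i j = ζ ^ (i : ℕ) * X i j := by
        rw [mul_comm (ζ ^ (j : ℕ)) (X i j)]; exact h'
      exact mul_right_cancel₀ hX h2
    exact Fin.ext (hζp.pow_inj i.isLt j.isLt hz.symm)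

lemma diag_geom {d : Fin n → ℂ} (hrec : ∀ j : Fin n, d (j + 1) = ζ * d j) :
    ∀ i : Fin n, d i = d 0 * ζ ^ (i : ℕ) := by
  intro ⟨m, hm⟩
  induction m with
  | zero =>
      have h0 : (⟨0, hm⟩ : Fin n) = 0 := by apply Fin.ext; simp
      rw [h0]
      simp
  | succ m ih =>
      have hm' : m < n := Nat.lt_of_succ_lt hm
      have he : (⟨m + 1, hm⟩ : Fin n) = ⟨m, hm'⟩ + 1 := by
        apply Fin.ext
        simp only [Fin.add_def, Fin.val_one']
        have h1n : 1 % n = 1 := Nat.mod_eq_of_lt (by omega)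
        rw [h1n]
        exact (Nat.mod_eq_of_lt hm).symm
      show d ⟨m + 1, hm⟩ = d 0 * ζ ^ (m + 1)
      rw [he, hrec, ih hm']
      simp only [Fin.val_mk]
      rw [pow_succ]
      ring

lemma shift_support (hζp : IsPrimitiveRoot ζ n)
    (hR : R = Matrix.diagonal fun i : Fin n => ζ ^ (i : ℕ))
    {Y : Matrix (Fin n) (Fin n) ℂ} (h : R * Y = ζ • (Y * R)) :
    ∀ i j : Fin n, i ≠ j + 1 → Y i j = 0 := by
  intro i j hij
  have h' : (R * Y) i j = (ζ • (Y * R)) i j := by rw [h]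
  rw [hR, Matrix.diagonal_mul, Matrix.smul_apply, Matrix.mul_diagonal, smul_eq_mul] at h'
  by_contra hY
  apply hij
  have hz : ζ ^ (i : ℕ) = ζ ^ (((j : ℕ) + 1) % n) := by
    rw [zpowmod hζp.pow_eq_one, pow_succ]
    have : ζ ^ (i : ℕ) * Y i j = (ζ ^ (j : ℕ) * ζ) * Y i j := by
      rw [h']; ring
    exact mul_right_cancel₀ hY this
  have hlt : ((j : ℕ) + 1) % n < n := Nat.mod_lt _ (NeZero.pos n)
  have := hζp.pow_inj i.isLt hlt hz
  apply Fin.ext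
  rw [this]
  simp only [Fin.add_def, Fin.val_one']
  conv_lhs => rw [Nat.add_mod]
  rw [Nat.mod_eq_of_lt j.isLt]

lemma shift_eq (hS' : ∀ i j : Fin n, S i j = if i = j + 1 then (1 : ℂ) else 0)
    {Y : Matrix (Fin n) (Fin n) ℂ} (hsupp : ∀ i j : Fin n, i ≠ j + 1 → Y i j = 0)
    (hcomm : Y * S = S * Y) : Y = Y (0 + 1) 0 • S := by
  have hrec : ∀ j : Fin n, Y (j + 1 + 1) (j + 1) = Y (j + 1) j := by
    intro j
    have h' : (Y * S) (j + 1 + 1) j = (S * Y) (j + 1 + 1) j := by rw [hcomm]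
    rw [mul_S hS', S_mul hS'] at h'
    rw [h', add_sub_cancel_right]
  have hconst : ∀ j : Fin n, Y (j + 1) j = Y (0 + 1) 0 := by
    intro ⟨m, hm⟩
    induction m with
    | zero =>
        have : (⟨0, hm⟩ : Fin n) = 0 := by apply Fin.ext; simp
        rw [this]
    | succ m ih =>
        have hm' : m < n := Nat.lt_of_succ_lt hm
        have he : (⟨m + 1, hm⟩ : Fin n) = ⟨m, hm'⟩ + 1 := by
          apply Fin.ext
          simp only [Fin.add_def, Fin.val_one']
          have : 1 % n = 1 := Nat.mod_eq_of_lt (by omega)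
          rw [this]
          exact (Nat.mod_eq_of_lt hm).symm
        rw [he, hrec, ih hm']
  ext i j
  rw [Matrix.smul_apply, hS', smul_eq_mul]
  by_cases hij : i = j + 1
  · rw [if_pos hij, mul_one, hij, hconst]
  · rw [if_neg hij, mul_zero, hsupp i j hij]


lemma Ejj_eq (hζp : IsPrimitiveRoot ζ n)
    (hR : R = Matrix.diagonal fun i : Fin n => ζ ^ (i : ℕ)) (j : Fin n) :
    Matrix.single j j (1 : ℂ)
      = (n : ℂ)⁻¹ • ∑ b ∈ Finset.range n, ((ζ ^ (j : ℕ))⁻¹) ^ b • R ^ b := by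
  have h1 : ζ ^ n = 1 := hζp.pow_eq_one
  have hzne : ζ ≠ 0 := hζp.ne_zero (NeZero.ne n)
  have hnne : (n : ℂ) ≠ 0 := Nat.cast_ne_zero.mpr (NeZero.ne n)
  ext p q
  rw [Matrix.smul_apply, Matrix.sum_apply]
  simp only [R_pow hR, Matrix.smul_apply, smul_eq_mul]
  by_cases hpq : p = q
  · subst hpq
    simp only [Matrix.diagonal_apply_eq]
    have hterm : ∀ b ∈ Finset.range n,
        ((ζ ^ (j : ℕ))⁻¹) ^ b * ζ ^ ((p : ℕ) * b) = ((ζ ^ (j : ℕ))⁻¹ * ζ ^ (p : ℕ)) ^ b := by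
      intro b _; rw [mul_pow, pow_mul]
    rw [Finset.sum_congr rfl hterm]
    by_cases hpj : p = j
    · subst hpj
      rw [inv_mul_cancel₀ (pow_ne_zero _ hzne)]
      simp only [one_pow, Finset.sum_const, Finset.card_range, nsmul_eq_mul, mul_one]
      rw [inv_mul_cancel₀ hnne, Matrix.single_apply_same]
    · set μ := (ζ ^ (j : ℕ))⁻¹ * ζ ^ (p : ℕ) with hμ
      have hμ1 : μ ≠ 1 := by
        intro hc
        exact hpj (Fin.ext (hζp.pow_inj p.isLt j.isLt
          ((inv_mul_eq_one₀ (pow_ne_zero _ hzne)).mp hc).symm))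
      have hμn : μ ^ n = 1 := by
        rw [hμ, mul_pow, inv_pow, ← pow_mul, ← pow_mul, mul_comm ((j : ℕ)) n,
          mul_comm ((p : ℕ)) n, pow_mul, pow_mul, h1, one_pow, one_pow, inv_one, one_mul]
      rw [geom_sum_eq hμ1 n, hμn, sub_self, zero_div, mul_zero,
        Matrix.single_apply_of_ne]
      intro ⟨h, _⟩; exact hpj h.symm
  · have : ∀ b ∈ Finset.range n,
        ((ζ ^ (j : ℕ))⁻¹) ^ b * (Matrix.diagonal fun i : Fin n => ζ ^ ((i : ℕ) * b)) p q = 0 := by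
      intro b _; rw [Matrix.diagonal_apply_ne _ hpq, mul_zero]
    rw [Finset.sum_congr rfl this, Finset.sum_const_zero, mul_zero,
      Matrix.single_apply_of_ne]
    intro ⟨h1', h2'⟩; exact hpq (h1'.symm.trans h2')

lemma Eij_eq (hS' : ∀ i j : Fin n, S i j = if i = j + 1 then (1 : ℂ) else 0) (i j : Fin n) :
    Matrix.single i j (1 : ℂ)
      = S ^ (((i - j : Fin n) : ℕ)) * Matrix.single j j (1 : ℂ) := by
  ext p q
  rw [Matrix.mul_apply, Finset.sum_eq_single j]
  · rw [S_pow hS', Fin.cast_val_eq_self]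
    have hadd : j + (i - j) = i := by rw [add_comm, sub_add_cancel]
    rw [hadd]
    simp only [Matrix.single, Matrix.of_apply]
    by_cases h2 : j = q <;> by_cases h3 : p = i <;>
      simp [h2, h3, eq_comm] <;>
      exact fun h : i = p => h3 h.symm
  · intro b _ hb
    rw [Matrix.single_apply_of_ne, mul_zero]
    intro ⟨h, _⟩; exact hb h.symm
  · intro h; exact absurd (Finset.mem_univ _) h

lemma ext_RS (hζp : IsPrimitiveRoot ζ n)
    (hR : R = Matrix.diagonal fun i : Fin n => ζ ^ (i : ℕ))
    (hS' : ∀ i j : Fin n, S i j = if i = j + 1 then (1 : ℂ) else 0)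
    (φ ψ : Matrix (Fin n) (Fin n) ℂ ≃ₐ[ℂ] Matrix (Fin n) (Fin n) ℂ)
    (hφR : φ R = ψ R) (hφS : φ S = ψ S) : φ = ψ := by
  let T := AlgHom.equalizer (φ : Matrix (Fin n) (Fin n) ℂ →ₐ[ℂ] Matrix (Fin n) (Fin n) ℂ) ψ
  have hRT : R ∈ T := hφR
  have hST : S ∈ T := hφS
  have hEjjT : ∀ j : Fin n, Matrix.single j j (1 : ℂ) ∈ T := by
    intro j
    rw [Ejj_eq hζp hR j]
    exact T.smul_mem (Subalgebra.sum_mem _ fun b _ =>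
      T.smul_mem (Subalgebra.pow_mem _ hRT b) _) _
  have hstdT : ∀ i j : Fin n, Matrix.single i j (1 : ℂ) ∈ T := by
    intro i j
    rw [Eij_eq hS' i j]
    exact mul_mem (Subalgebra.pow_mem _ hST _) (hEjjT j)
  have hA : ∀ A : Matrix (Fin n) (Fin n) ℂ, A ∈ T := by
    intro A
    have hsum : (∑ i : Fin n, ∑ j : Fin n, Matrix.single i j (A i j)) ∈ T := by
      refine Subalgebra.sum_mem _ fun i _ => Subalgebra.sum_mem _ fun j _ => ?_
      have : Matrix.single i j (A i j) = (A i j) • Matrix.single i j (1 : ℂ) := by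
        rw [Matrix.smul_single, smul_eq_mul, mul_one]
      rw [this]
      exact T.smul_mem (hstdT i j) _
    exact (Matrix.matrix_eq_sum_single A) ▸ hsum
  exact AlgEquiv.ext fun A => hA A

end Stmt14Aux


/-- Consider the action of `C_n × C_n` on `M_n(ℂ)` by
`(ζ^k, ζ^l)·A = R^l S^k A S^{-k} R^{-l}`.  Every algebra automorphism `φ` of
`M_n(ℂ)` commuting with this action satisfies `φ(R) = ζ^k • R` and
`φ(S) = ζ^l • S` for some `k, l`, and this correspondence
`φ ↦ (ζ^k, ζ^l)` is a group isomorphism between the group of equivariant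
automorphisms and `C_n × C_n`. -/
theorem stmt14 (n : ℕ) (hn : 0 < n)
    (ζ : ℂ) (hζ : ζ = Complex.exp (2 * Real.pi * Complex.I / n))
    (R S : Matrix (Fin n) (Fin n) ℂ)
    (hR : R = Matrix.diagonal fun i : Fin n => ζ ^ (i : ℕ))
    (hS : ∀ i j : Fin n, S i j = if (i : ℕ) = ((j : ℕ) + 1) % n then (1 : ℂ) else 0)
    (Equivariant : (Matrix (Fin n) (Fin n) ℂ ≃ₐ[ℂ] Matrix (Fin n) (Fin n) ℂ) → Prop)
    (hEquivariant : ∀ φ, Equivariant φ ↔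
      ∀ (k l : ℕ) (A : Matrix (Fin n) (Fin n) ℂ),
        φ (R ^ l * S ^ k * A * (S ^ k)⁻¹ * (R ^ l)⁻¹) =
          R ^ l * S ^ k * φ A * (S ^ k)⁻¹ * (R ^ l)⁻¹) :
    ∃ Φ : (Matrix (Fin n) (Fin n) ℂ ≃ₐ[ℂ] Matrix (Fin n) (Fin n) ℂ) →
        Multiplicative (ZMod n) × Multiplicative (ZMod n),
      (∀ φ ψ, Equivariant φ → Equivariant ψ → Φ (φ * ψ) = Φ φ * Φ ψ) ∧
      (∀ φ ψ, Equivariant φ → Equivariant ψ → Φ φ = Φ ψ → φ = ψ) ∧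
      (∀ g, ∃ φ, Equivariant φ ∧ Φ φ = g) ∧
      (∀ φ, Equivariant φ → ∃ k l : ℕ,
        Φ φ = (Multiplicative.ofAdd (k : ZMod n), Multiplicative.ofAdd (l : ZMod n)) ∧
        φ R = ζ ^ k • R ∧ φ S = ζ ^ l • S) := by
  classical
  haveI : NeZero n := ⟨hn.ne'⟩
  have hζp : IsPrimitiveRoot ζ n := by
    rw [hζ]; exact Complex.isPrimitiveRoot_exp n hn.ne'
  have h1 : ζ ^ n = 1 := hζp.pow_eq_one
  have hzne : ζ ≠ 0 := hζp.ne_zero (NeZero.ne n)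
  have hS' : ∀ i j : Fin n, S i j = if i = j + 1 then (1 : ℂ) else 0 := Stmt14Aux.S_entry hS
  have hSn : S ^ n = 1 := Stmt14Aux.S_npow hS'
  have hRn : R ^ n = 1 := Stmt14Aux.R_npow hR h1
  have hq := Stmt14Aux.R_pow_S hR hS' h1
  have hRS : R * S = ζ • (S * R) := Stmt14Aux.RS_comm hR hS' h1
  have hSinv : S⁻¹ = S ^ (n - 1) := by
    have := Stmt14Aux.S_pow_inv hS' 1; rwa [pow_one, one_mul] at this
  have hRinv : R⁻¹ = R ^ (n - 1) := by
    have := Stmt14Aux.R_pow_inv hR h1 1; rwa [pow_one, one_mul] at this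
  have hSc : S * S ^ (n - 1) = 1 := by
    have := Stmt14Aux.S_pow_cancel hS' 1; rwa [pow_one, one_mul] at this
  have hSc' : S ^ (n - 1) * S = 1 := by
    have := Stmt14Aux.S_pow_cancel' hS' 1; rwa [pow_one, one_mul] at this
  have hRc : R * R ^ (n - 1) = 1 := by
    have := Stmt14Aux.R_pow_cancel hR h1 1; rwa [pow_one, one_mul] at this
  have hRc' : R ^ (n - 1) * R = 1 := by
    have := Stmt14Aux.R_pow_cancel' hR h1 1; rwa [pow_one, one_mul] at this
  -- main structural result: every equivariant automorphism scales R and S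
  have main : ∀ φ : Matrix (Fin n) (Fin n) ℂ ≃ₐ[ℂ] Matrix (Fin n) (Fin n) ℂ,
      Equivariant φ → ∃ k l : ℕ, φ R = ζ ^ k • R ∧ φ S = ζ ^ l • S := by
    intro φ hφ
    rw [hEquivariant] at hφ
    have hcS : ∀ A, φ (S * A * S ^ (n - 1)) = S * φ A * S ^ (n - 1) := by
      intro A
      have := hφ 1 0 A
      simpa [hSinv] using this
    have hcR : ∀ A, φ (R * A * R ^ (n - 1)) = R * φ A * R ^ (n - 1) := by
      intro A
      have := hφ 0 1 A
      simpa [hRinv] using this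
    -- analysis of φ R
    have hXc : φ R * R = R * φ R := by
      have h0 : R * R * R ^ (n - 1) = R := by rw [mul_assoc, hRc, mul_one]
      have hthis := hcR R
      rw [h0] at hthis
      conv_lhs => rw [hthis]
      rw [mul_assoc (R * φ R), hRc', mul_one]
    have hXs : φ R * S = ζ • (S * φ R) := by
      have hkey : R = ζ • (S * R * S ^ (n - 1)) := by
        have h2 : R * S * S ^ (n - 1) = ζ • (S * R * S ^ (n - 1)) := by
          rw [hRS, smul_mul_assoc]
        rw [← h2, mul_assoc, hSc, mul_one]
      have h3 : φ R = ζ • (S * φ R * S ^ (n - 1)) := by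
        conv_lhs => rw [hkey]
        rw [_root_.map_smul, hcS R]
      conv_lhs => rw [h3]
      rw [smul_mul_assoc, mul_assoc (S * φ R), hSc', mul_one]
    have hXd := Stmt14Aux.comm_R_diag hζp hR hXc
    have hrec : ∀ j : Fin n, φ R (j + 1) (j + 1) = ζ * φ R j j := by
      intro j
      have h' : (φ R * S) (j + 1) j = (ζ • (S * φ R)) (j + 1) j := by rw [hXs]
      rwa [Matrix.smul_apply, Stmt14Aux.mul_S hS', Stmt14Aux.S_mul hS',
        add_sub_cancel_right, smul_eq_mul] at h'
    have hdgeom : ∀ i : Fin n, φ R i i = φ R 0 0 * ζ ^ (i : ℕ) :=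
      Stmt14Aux.diag_geom hrec
    have hdiag : ∀ c : ℂ, (Matrix.diagonal fun i : Fin n => c * ζ ^ (i : ℕ)) = c • R := by
      intro c
      rw [hR]
      ext i j
      by_cases hij : i = j
      · subst hij
        rw [Matrix.diagonal_apply_eq, Matrix.smul_apply, Matrix.diagonal_apply_eq, smul_eq_mul]
      · rw [Matrix.diagonal_apply_ne _ hij, Matrix.smul_apply,
          Matrix.diagonal_apply_ne _ hij, smul_zero]
    have hXeq : φ R = φ R 0 0 • R := by
      conv_lhs => rw [hXd]
      rw [show (fun i => φ R i i) = fun i : Fin n => φ R 0 0 * ζ ^ (i : ℕ) from funext hdgeom]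
      exact hdiag _
    have hXn : (φ R 0 0) ^ n = 1 := by
      have hpow : (φ R) ^ n = 1 := by rw [← _root_.map_pow, hRn, _root_.map_one]
      rw [hXeq, smul_pow, hRn] at hpow
      have := congrFun (congrFun hpow 0) 0
      simpa [Matrix.smul_apply, Matrix.one_apply] using this
    obtain ⟨k, hkn, hk⟩ := hζp.eq_pow_of_pow_eq_one hXn
    -- analysis of φ S
    have hYc : φ S * S = S * φ S := by
      have h0 : S * S * S ^ (n - 1) = S := by rw [mul_assoc, hSc, mul_one]
      have hthis := hcS S
      rw [h0] at hthis
      conv_lhs => rw [hthis]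
      rw [mul_assoc (S * φ S), hSc', mul_one]
    have hYr : R * φ S = ζ • (φ S * R) := by
      have hkey : R * S * R ^ (n - 1) = ζ • S := by
        rw [hRS, smul_mul_assoc, mul_assoc, hRc, mul_one]
      have h2 := hcR S
      rw [hkey, _root_.map_smul] at h2
      have h3 : ζ • (φ S * R) = R * φ S * R ^ (n - 1) * R := by
        rw [← h2, smul_mul_assoc]
      rw [h3, mul_assoc (R * φ S), hRc', mul_one]
    have hsupp := Stmt14Aux.shift_support hζp hR hYr
    have hYeq := Stmt14Aux.shift_eq hS' hsupp hYc
    have hYn : (φ S (0 + 1) 0) ^ n = 1 := by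
      have hpow : (φ S) ^ n = 1 := by rw [← _root_.map_pow, hSn, _root_.map_one]
      rw [hYeq, smul_pow, hSn] at hpow
      have := congrFun (congrFun hpow 0) 0
      simpa [Matrix.smul_apply, Matrix.one_apply] using this
    obtain ⟨l, hln, hl⟩ := hζp.eq_pow_of_pow_eq_one hYn
    exact ⟨k, l, by rw [hXeq, ← hk], by rw [hYeq, ← hl]⟩
  -- scalar extraction helpers
  have scalR : ∀ c c' : ℂ, c • R = c' • R → c = c' := by
    intro c c' h
    have := congrFun (congrFun h 0) 0
    rw [hR] at this
    simpa [Matrix.smul_apply, Matrix.diagonal_apply_eq] using this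
  have scalS : ∀ c c' : ℂ, c • S = c' • S → c = c' := by
    intro c c' h
    have h2 := congrFun (congrFun h (0 + 1)) 0
    rwa [Matrix.smul_apply, Matrix.smul_apply, hS' (0 + 1) 0, if_pos rfl, smul_eq_mul,
      smul_eq_mul, mul_one, mul_one] at h2
  have castlem : ∀ a b : ℕ, ζ ^ a = ζ ^ b → (a : ZMod n) = (b : ZMod n) := by
    intro a b h
    have hmod : a % n = b % n := hζp.pow_inj (Nat.mod_lt _ hn) (Nat.mod_lt _ hn)
      (by rw [Stmt14Aux.zpowmod h1, Stmt14Aux.zpowmod h1]; exact h)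
    exact (ZMod.natCast_eq_natCast_iff a b n).mpr hmod
  have castrev : ∀ a b : ℕ, (a : ZMod n) = (b : ZMod n) → ζ ^ a = ζ ^ b := by
    intro a b h
    have hmod : a % n = b % n := (ZMod.natCast_eq_natCast_iff a b n).mp h
    rw [← Stmt14Aux.zpowmod h1 a, ← Stmt14Aux.zpowmod h1 b, hmod]
  -- key computation for the chosen map
  have keyΦ : ∀ (φ : Matrix (Fin n) (Fin n) ℂ ≃ₐ[ℂ] Matrix (Fin n) (Fin n) ℂ) (k l : ℕ),
      φ R = ζ ^ k • R → φ S = ζ ^ l • S →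
      (if h : ∃ kl : ℕ × ℕ, φ R = ζ ^ kl.1 • R ∧ φ S = ζ ^ kl.2 • S then
        (Multiplicative.ofAdd ((h.choose.1 : ZMod n)),
          Multiplicative.ofAdd ((h.choose.2 : ZMod n)))
      else 1)
        = (Multiplicative.ofAdd ((k : ZMod n)), Multiplicative.ofAdd ((l : ZMod n))) := by
    intro φ k l hk hl
    have hP : ∃ kl : ℕ × ℕ, φ R = ζ ^ kl.1 • R ∧ φ S = ζ ^ kl.2 • S := ⟨(k, l), hk, hl⟩
    rw [dif_pos hP]
    have e1 : (hP.choose.1 : ZMod n) = (k : ZMod n) :=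
      castlem _ _ (scalR _ _ (hP.choose_spec.1.symm.trans hk))
    have e2 : (hP.choose.2 : ZMod n) = (l : ZMod n) :=
      castlem _ _ (scalS _ _ (hP.choose_spec.2.symm.trans hl))
    rw [e1, e2]
  refine ⟨fun φ => if h : ∃ kl : ℕ × ℕ, φ R = ζ ^ kl.1 • R ∧ φ S = ζ ^ kl.2 • S then
      (Multiplicative.ofAdd ((h.choose.1 : ZMod n)),
        Multiplicative.ofAdd ((h.choose.2 : ZMod n)))
    else 1, ?_, ?_, ?_, ?_⟩
  · -- homomorphism
    intro φ ψ hφ hψ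
    obtain ⟨kφ, lφ, hkφ, hlφ⟩ := main φ hφ
    obtain ⟨kψ, lψ, hkψ, hlψ⟩ := main ψ hψ
    have hmulR : (φ * ψ) R = ζ ^ (kφ + kψ) • R := by
      rw [AlgEquiv.mul_apply, hkψ, _root_.map_smul, hkφ, smul_smul, ← pow_add, Nat.add_comm kψ kφ]
    have hmulS : (φ * ψ) S = ζ ^ (lφ + lψ) • S := by
      rw [AlgEquiv.mul_apply, hlψ, _root_.map_smul, hlφ, smul_smul, ← pow_add, Nat.add_comm lψ lφ]
    simp only [keyΦ _ _ _ hmulR hmulS, keyΦ _ _ _ hkφ hlφ, keyΦ _ _ _ hkψ hlψ]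
    rw [Prod.mk_mul_mk, ← ofAdd_add, ← ofAdd_add, Nat.cast_add, Nat.cast_add]
  · -- injectivity
    intro φ ψ hφ hψ hΦeq
    obtain ⟨kφ, lφ, hkφ, hlφ⟩ := main φ hφ
    obtain ⟨kψ, lψ, hkψ, hlψ⟩ := main ψ hψ
    simp only [keyΦ _ _ _ hkφ hlφ, keyΦ _ _ _ hkψ hlψ] at hΦeq
    obtain ⟨e1, e2⟩ := Prod.ext_iff.mp hΦeq
    have e1' : (kφ : ZMod n) = (kψ : ZMod n) := by
      simpa using congrArg Multiplicative.toAdd e1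
    have e2' : (lφ : ZMod n) = (lψ : ZMod n) := by
      simpa using congrArg Multiplicative.toAdd e2
    refine Stmt14Aux.ext_RS hζp hR hS' φ ψ ?_ ?_
    · rw [hkφ, hkψ, castrev _ _ e1']
    · rw [hlφ, hlψ, castrev _ _ e2']
  · -- surjectivity
    intro g
    set k : ℕ := (Multiplicative.toAdd g.1).val with hkdef
    set b : ℕ := (Multiplicative.toAdd g.2).val with hbdef
    have hkn : k < n := ZMod.val_lt _
    have hbn : b < n := ZMod.val_lt _
    set a : ℕ := n - k with hadef
    have hU : (S ^ a * R ^ b) * (R ^ (b * (n - 1)) * S ^ (a * (n - 1))) = 1 := by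
      rw [mul_assoc, ← mul_assoc (R ^ b), Stmt14Aux.R_pow_cancel hR h1 b, one_mul,
        Stmt14Aux.S_pow_cancel hS' a]
    have hUi : (R ^ (b * (n - 1)) * S ^ (a * (n - 1))) * (S ^ a * R ^ b) = 1 := by
      rw [mul_assoc, ← mul_assoc (S ^ (a * (n - 1))), Stmt14Aux.S_pow_cancel' hS' a, one_mul,
        Stmt14Aux.R_pow_cancel' hR h1 b]
    set φ := Stmt14Aux.conjAE (S ^ a * R ^ b) (R ^ (b * (n - 1)) * S ^ (a * (n - 1))) hU hUi
      with hφdef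
    have hEq : Equivariant φ := by
      rw [hEquivariant]
      intro k' l' A
      rw [Stmt14Aux.S_pow_inv hS' k', Stmt14Aux.R_pow_inv hR h1 l',
        Stmt14Aux.conjAE_apply, Stmt14Aux.conjAE_apply]
      have hP : (R ^ l' * S ^ k') * (S ^ (k' * (n - 1)) * R ^ (l' * (n - 1))) = 1 := by
        rw [mul_assoc, ← mul_assoc (S ^ k'), Stmt14Aux.S_pow_cancel hS' k', one_mul,
          Stmt14Aux.R_pow_cancel hR h1 l']
      have hPi : (S ^ (k' * (n - 1)) * R ^ (l' * (n - 1))) * (R ^ l' * S ^ k') = 1 := by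
        rw [mul_assoc, ← mul_assoc (R ^ (l' * (n - 1))), Stmt14Aux.R_pow_cancel' hR h1 l',
          one_mul, Stmt14Aux.S_pow_cancel' hS' k']
      have hUP : (S ^ a * R ^ b) * (R ^ l' * S ^ k')
          = ζ ^ (b * k' + (l' * a) * (n - 1)) • ((R ^ l' * S ^ k') * (S ^ a * R ^ b)) := by
        rw [hq l' k']
        simp only [mul_smul_comm, smul_mul_assoc, smul_smul]
        rw [Stmt14Aux.W_comm hR hS' h1 a b k' l', smul_smul]
        congr 1
        ring
      rw [mul_assoc (R ^ l' * S ^ k' * A) (S ^ (k' * (n - 1))) (R ^ (l' * (n - 1))),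
        mul_assoc (R ^ l' * S ^ k' * ((S ^ a * R ^ b) * A * (R ^ (b * (n - 1)) * S ^ (a * (n - 1)))))
          (S ^ (k' * (n - 1))) (R ^ (l' * (n - 1)))]
      exact Stmt14Aux.conj_comm hU hUi hP hPi hUP A
    have h5 : R * S ^ (a * (n - 1)) = ζ ^ (a * (n - 1)) • (S ^ (a * (n - 1)) * R) := by
      have := hq 1 (a * (n - 1))
      rwa [pow_one, one_mul] at this
    have hstepR : (S ^ a * R ^ b) * R * (R ^ (b * (n - 1)) * S ^ (a * (n - 1)))
        = ζ ^ (a * (n - 1)) • R := by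
      have he1 : b + 1 + b * (n - 1) = b * n + 1 := by
        have hb' : b + b * (n - 1) = b * n := Stmt14Aux.pow_cancel_arith b hn
        omega
      calc (S ^ a * R ^ b) * R * (R ^ (b * (n - 1)) * S ^ (a * (n - 1)))
          = S ^ a * (R ^ (b + 1 + b * (n - 1)) * S ^ (a * (n - 1))) := by
            simp only [mul_assoc, pow_add, pow_one]
        _ = S ^ a * (R ^ (b * n + 1) * S ^ (a * (n - 1))) := by rw [he1]
        _ = S ^ a * (R * S ^ (a * (n - 1))) := by
            rw [pow_succ, Stmt14Aux.R_powmul_n hR h1 b, one_mul]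
        _ = ζ ^ (a * (n - 1)) • (S ^ a * (S ^ (a * (n - 1)) * R)) := by
            rw [h5, mul_smul_comm]
        _ = ζ ^ (a * (n - 1)) • R := by
            rw [← mul_assoc, Stmt14Aux.S_pow_cancel hS' a, one_mul]
    have h6 : R ^ b * S = ζ ^ b • (S * R ^ b) := by
      have := hq b 1
      rwa [pow_one, mul_one] at this
    have hstepS : (S ^ a * R ^ b) * S * (R ^ (b * (n - 1)) * S ^ (a * (n - 1)))
        = ζ ^ b • S := by
      have he2 : a + 1 + a * (n - 1) = a * n + 1 := by
        have ha' : a + a * (n - 1) = a * n := Stmt14Aux.pow_cancel_arith a hn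
        omega
      calc (S ^ a * R ^ b) * S * (R ^ (b * (n - 1)) * S ^ (a * (n - 1)))
          = S ^ a * (R ^ b * S) * (R ^ (b * (n - 1)) * S ^ (a * (n - 1))) := by
            rw [mul_assoc (S ^ a) (R ^ b) S]
        _ = ζ ^ b • (S ^ a * (S * R ^ b) * (R ^ (b * (n - 1)) * S ^ (a * (n - 1)))) := by
            rw [h6, mul_smul_comm, smul_mul_assoc]
        _ = ζ ^ b • (S ^ (a + 1 + a * (n - 1))) := by
            congr 1
            rw [show S ^ a * (S * R ^ b) * (R ^ (b * (n - 1)) * S ^ (a * (n - 1)))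
                = S ^ a * S * ((R ^ b * R ^ (b * (n - 1))) * S ^ (a * (n - 1))) from by
              simp only [mul_assoc], Stmt14Aux.R_pow_cancel hR h1 b, one_mul]
            simp only [pow_add, pow_one, mul_assoc]
        _ = ζ ^ b • S := by
            rw [he2, pow_succ, Stmt14Aux.S_powmul_n hS' a, one_mul]
    have hsc : ζ ^ (a * (n - 1)) = ζ ^ k := by
      have e1 : ζ ^ (a * (n - 1)) * ζ ^ a = 1 := by
        rw [← pow_add, Nat.add_comm, Stmt14Aux.pow_cancel_arith a hn, mul_comm a n,
          pow_mul, h1, one_pow]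
      have e2 : ζ ^ k * ζ ^ a = 1 := by
        rw [← pow_add, show k + a = n by omega, h1]
      exact mul_right_cancel₀ (pow_ne_zero a hzne) (e1.trans e2.symm)
    have hφR : φ R = ζ ^ k • R := by
      rw [hφdef, Stmt14Aux.conjAE_apply, hstepR, hsc]
    have hφS : φ S = ζ ^ b • S := by
      rw [hφdef, Stmt14Aux.conjAE_apply, hstepS]
    refine ⟨φ, hEq, ?_⟩
    simp only [keyΦ _ _ _ hφR hφS]
    have hk1 : ((k : ℕ) : ZMod n) = Multiplicative.toAdd g.1 := by
      rw [hkdef]; exact ZMod.natCast_rightInverse _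
    have hb1 : ((b : ℕ) : ZMod n) = Multiplicative.toAdd g.2 := by
      rw [hbdef]; exact ZMod.natCast_rightInverse _
    rw [hk1, hb1, ofAdd_toAdd, ofAdd_toAdd]
  · -- values
    intro φ hφ
    obtain ⟨k, l, hk, hl⟩ := main φ hφ
    exact ⟨k, l, keyΦ _ _ _ hk hl, hk, hl⟩
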